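/- Let f* be a minimum flow of a feasible flow network (G,s,t,d), and let S be the set of vertices reachable from s in the residual graph of G with respect to f*, T = V∖S. Then (S,T) is a one-way cut, every edge crossing from S to T carries flow equal to its demand, and the demand of (S,T) equals |f*|; hence (S,T) is a maximum one-way cut. -/

import Mathlib

open Finset

section Prelude

variable {V : Type*}

/-- A (directed) path in the graph with edge relation `E`: nonempty, consecutive
vertices joined by edges, and vertices pairwise distinct. -/
def IsPathOn (E : V → V → Prop) (p : List V) : Prop :=
  p ≠ [] ∧ p.Chain' E ∧ p.Nodup

/-- Reachability in the graph with edge relation `E`. -/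
def Reaches (E : V → V → Prop) : V → V → Prop := Relation.ReflTransGen E

/-- The edges of a path, as the list of consecutive pairs of vertices. -/
def pathEdges (p : List V) : List (V × V) := p.zip p.tail

/-- A path cover: a multiset of paths such that every vertex is on some path. -/
def IsPathCover (E : V → V → Prop) (P : Multiset (List V)) : Prop :=
  (∀ p ∈ P, IsPathOn E p) ∧ ∀ v : V, ∃ p ∈ P, v ∈ p

/-- The width of a graph: the minimum size of a path cover. -/
noncomputable def gwidth (E : V → V → Prop) : ℕ :=
  sInf {n | ∃ P : Multiset (List V), IsPathCover E P ∧ Multiset.card P = n}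

/-- A DAG: no proper (directed) cycles. -/
def IsDAG (E : V → V → Prop) : Prop := ∀ v, ¬ Relation.TransGen E v v

/-- The edge relation of a finite edge set. -/
def edgeRel (E : Finset (V × V)) : V → V → Prop := fun a b => (a, b) ∈ E

/-- Multiplicity of an edge with respect to a multiset of paths. -/
def mult [DecidableEq V] (P : Multiset (List V)) (e : V × V) : ℕ :=
  Multiset.countP (fun p => e ∈ pathEdges p) P

/-- A flow network: a finite edge set, source, sink, and lower bounds (demands). -/
structure FlowNet (V : Type*) where
  E : Finset (V × V)
  s : V
  t : V
  d : V × V → ℕ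

/-- A flow: supported on edges, satisfying the demands, and flow conservation at
every vertex other than the source and the sink. -/
def IsFlow [Fintype V] (N : FlowNet V) (f : V × V → ℕ) : Prop :=
  (∀ e, e ∉ N.E → f e = 0) ∧ (∀ e ∈ N.E, N.d e ≤ f e) ∧
  ∀ v : V, v ≠ N.s → v ≠ N.t → (∑ u : V, f (u, v)) = ∑ u : V, f (v, u)

/-- The size of a flow: net outflow at the source. -/
def flowSize [Fintype V] (N : FlowNet V) (f : V × V → ℕ) : ℤ :=
  (∑ u : V, (f (N.s, u) : ℤ)) - ∑ u : V, (f (u, N.s) : ℤ)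

/-- An `st`-cut, given by the source side `S` (the sink side is the complement). -/
def IsCut (N : FlowNet V) (S : Set V) : Prop := N.s ∈ S ∧ N.t ∉ S

/-- A one-way cut: a cut with no edge crossing from `T = Sᶜ` to `S`. -/
def IsOwCut (N : FlowNet V) (S : Set V) : Prop :=
  IsCut N S ∧ ∀ e ∈ N.E, e.1 ∉ S → e.2 ∉ S

open Classical in
/-- The demand of a cut: sum of demands of edges crossing from `S` to `T`. -/
noncomputable def cutDemand (N : FlowNet V) (S : Set V) : ℕ :=
  ∑ e ∈ N.E.filter (fun e => e.1 ∈ S ∧ e.2 ∉ S), N.d e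

open Classical in
/-- The net flow across a cut: flow from `S` to `T` minus flow from `T` to `S`. -/
noncomputable def cutFlow (N : FlowNet V) (S : Set V) (f : V × V → ℕ) : ℤ :=
  (∑ e ∈ N.E.filter (fun e => e.1 ∈ S ∧ e.2 ∉ S), (f e : ℤ))
    - ∑ e ∈ N.E.filter (fun e => e.1 ∉ S ∧ e.2 ∈ S), (f e : ℤ)

/-- The residual graph of a network w.r.t. a flow `f`: reverse edges of all edges,
plus the edges whose flow strictly exceeds the demand. -/
def ResidualEdge (N : FlowNet V) (f : V × V → ℕ) (u v : V) : Prop :=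
  (v, u) ∈ N.E ∨ ((u, v) ∈ N.E ∧ N.d (u, v) < f (u, v))

/-- Vertices of the flow reduction: two copies of each vertex, plus source/sink. -/
abbrev FR (V : Type*) := (V ⊕ V) ⊕ Bool

def vinF (v : V) : FR V := Sum.inl (Sum.inl v)
def voutF (v : V) : FR V := Sum.inl (Sum.inr v)
def fsrc : FR V := Sum.inr false
def fsnk : FR V := Sum.inr true

/-- Demands of the flow reduction: `1` on each edge `(vin v, vout v)`, else `0`. -/
def redD [DecidableEq V] : FR V × FR V → ℕ
  | (Sum.inl (Sum.inl a), Sum.inl (Sum.inr b)) => if a = b then 1 else 0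
  | _ => 0

/-- The flow reduction of the DAG with edge set `E`. -/
def redNet [Fintype V] [DecidableEq V] (E : Finset (V × V)) : FlowNet (FR V) where
  E := (univ.image fun v : V => (fsrc, vinF v)) ∪ (univ.image fun v : V => (voutF v, fsnk))
        ∪ (univ.image fun v : V => (vinF v, voutF v))
        ∪ (E.image fun e => (voutF e.1, vinF e.2))
  s := fsrc
  t := fsnk
  d := redD

/-- The layered cut `L^{≤ l}`: the source together with all split vertices of level `≤ l`. -/
def layerCut (ℓ : FR V → ℤ) (l : ℤ) : Set (FR V) :=
  {x | x = fsrc ∨ ((∃ v : V, x = vinF v ∨ x = voutF v) ∧ ℓ x ≤ l)}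

open Classical in
/-- The layered antichain `A^l`. -/
noncomputable def layerAntichain [Fintype V] (ℓ : FR V → ℤ) (l : ℤ) : Finset V :=
  univ.filter (fun v => ℓ (vinF v) ≤ l ∧ l < ℓ (voutF v))



section ListAux
variable {V : Type*}

private lemma zipTail_eq : ∀ p : List V, p.zip p.tail = p.dropLast.zip p.tail
  | [] => rfl
  | [_] => rfl
  | a :: b :: r => by
    have ih := zipTail_eq (b :: r)
    simp only [List.tail_cons] at ih ⊢
    rw [List.dropLast_cons₂, List.zip_cons_cons, List.zip_cons_cons, ih]

private lemma mem_zipTail {p : List V} {a b : V} (h : (a, b) ∈ p.zip p.tail) :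
    ∃ i, ∃ hi : i + 1 < p.length, p[i] = a ∧ p[i + 1] = b := by
  obtain ⟨i, hi, he⟩ := List.getElem_of_mem h
  rw [List.getElem_zip] at he
  have hlen : i < p.tail.length := by
    have := hi; rw [List.length_zip] at this; omega
  have h1 : i + 1 < p.length := by
    rw [List.length_tail] at hlen; omega
  obtain ⟨h2, h3⟩ := Prod.mk.injEq .. ▸ he
  exact ⟨i, h1, h2, by rw [← List.getElem_tail (i := i)]; exact h3⟩

private lemma chain'_of_zipTail {R : V → V → Prop} {p : List V} (hc : p.Chain' R)
    {a b : V} (h : (a, b) ∈ p.zip p.tail) : R a b := by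
  obtain ⟨i, hi, ha, hb⟩ := mem_zipTail h
  have := List.isChain_iff_getElem.mp hc i (by omega)
  simpa [List.get_eq_getElem, ha, hb] using this

private lemma not_swap_mem_zipTail {p : List V} (hn : p.Nodup) {a b : V}
    (h : (a, b) ∈ p.zip p.tail) : (b, a) ∉ p.zip p.tail := by
  intro h'
  obtain ⟨i, hi, ha, hb⟩ := mem_zipTail h
  obtain ⟨j, hj, hb', ha'⟩ := mem_zipTail h'
  have e1 : i + 1 = j := (hn.getElem_inj_iff).mp (hb.trans hb'.symm)
  have e2 : j + 1 = i := (hn.getElem_inj_iff).mp (ha'.trans ha.symm)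
  omega

private lemma map_snd_zipTail (p : List V) :
    (p.zip p.tail).map Prod.snd = p.tail :=
  List.map_snd_zip (by rw [List.length_tail]; omega)

private lemma map_fst_zipTail (p : List V) :
    (p.zip p.tail).map Prod.fst = p.dropLast := by
  rw [zipTail_eq]
  exact List.map_fst_zip (by rw [List.length_dropLast, List.length_tail])

open Classical in
private lemma sum_ind_snd [Fintype V] (L : List (V × V)) (h : (L.map Prod.snd).Nodup) (v : V) :
    ∑ u : V, (if (u, v) ∈ L then (1 : ℤ) else 0) = if v ∈ L.map Prod.snd then 1 else 0 := by
  by_cases hv : v ∈ L.map Prod.snd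
  · obtain ⟨q, hq, hqv⟩ := List.mem_map.mp hv
    have huniq : ∀ u : V, (u, v) ∈ L ↔ u = q.1 := by
      intro u
      constructor
      · intro hu
        have := List.inj_on_of_nodup_map h hu hq (by simp [hqv])
        exact congrArg Prod.fst this
      · rintro rfl
        rwa [show (q.1, v) = q by rw [← hqv]]
    simp only [huniq, hv, if_true]
    simp
  · rw [if_neg hv]
    refine Finset.sum_eq_zero fun u _ => ?_
    rw [if_neg fun hu => hv (List.mem_map.mpr ⟨(u, v), hu, rfl⟩)]

open Classical in
private lemma sum_ind_fst [Fintype V] (L : List (V × V)) (h : (L.map Prod.fst).Nodup) (v : V) :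
    ∑ u : V, (if (v, u) ∈ L then (1 : ℤ) else 0) = if v ∈ L.map Prod.fst then 1 else 0 := by
  by_cases hv : v ∈ L.map Prod.fst
  · obtain ⟨q, hq, hqv⟩ := List.mem_map.mp hv
    have huniq : ∀ u : V, (v, u) ∈ L ↔ u = q.2 := by
      intro u
      constructor
      · intro hu
        have := List.inj_on_of_nodup_map h hu hq (by simp [hqv])
        exact congrArg Prod.snd this
      · rintro rfl
        rwa [show (v, q.2) = q by rw [← hqv]]
    simp only [huniq, hv, if_true]
    simp
  · rw [if_neg hv]
    refine Finset.sum_eq_zero fun u _ => ?_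
    rw [if_neg fun hu => hv (List.mem_map.mpr ⟨(v, u), hu, rfl⟩)]

end ListAux


section PathAux
variable {V : Type*}

private lemma exists_nodup_path {r : V → V → Prop} {a b : V}
    (h : Relation.ReflTransGen r a b) :
    ∃ p : List V, p ≠ [] ∧ p.Chain' r ∧ p.Nodup ∧ p.head? = some a ∧ p.getLast? = some b := by
  classical
  induction h with
  | refl => exact ⟨[a], by simp, List.isChain_singleton a, by simp⟩
  | @tail b c hab hbc ih =>
    obtain ⟨p, hne, hch, hnd, hh, hl⟩ := ih
    by_cases hc : c ∈ p
    · set q := p.takeWhile (fun x => x ≠ c) ++ [c] with hq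
      have hdrop : p.dropWhile (fun x => x ≠ c) ≠ [] := by
        intro hnil
        rw [List.dropWhile_eq_nil_iff] at hnil
        simpa using hnil c hc
      have hheadd : (p.dropWhile (fun x => x ≠ c)).head hdrop = c := by
        have := List.head_dropWhile_not (fun x => x ≠ c) hdrop
        simpa using this
      have hct := List.cons_head_tail hdrop
      rw [hheadd] at hct
      have hpref : q <+: p := by
        refine ⟨(p.dropWhile (fun x => x ≠ c)).tail, ?_⟩
        rw [hq, List.append_assoc, List.singleton_append, hct,
          List.takeWhile_append_dropWhile]
      have hqne : q ≠ [] := by simp [hq]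
      refine ⟨q, hqne, hch.prefix hpref, hpref.sublist.nodup hnd, ?_, by
        rw [hq]; exact List.getLast?_concat⟩
      obtain ⟨m, hm⟩ := hpref
      rw [← hm, List.head?_append, List.head?_eq_head hqne] at hh
      rw [List.head?_eq_head hqne]
      simpa using hh
    · refine ⟨p ++ [c], by simp, ?_, by simp [List.nodup_append, hnd, hc]; exact fun x hx h => hc (h ▸ hx), ?_,
        List.getLast?_concat⟩
      · show List.IsChain r (p ++ [c])
        rw [List.isChain_append]
        refine ⟨hch, List.isChain_singleton _, fun x hx y hy => ?_⟩
        simp only [List.head?_cons, Option.mem_def, Option.some.injEq] at hy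
        rw [Option.mem_def, hl, Option.some.injEq] at hx
        subst hx; subst hy; exact hbc
      · rw [List.head?_append, hh]; rfl

end PathAux

section FlowAux
variable {V : Type*}

private lemma head_mem_dropLast {p : List V} (hne : p ≠ [])
    (h : p.head hne ≠ p.getLast hne) : p.head hne ∈ p.dropLast := by
  match p with
  | [x] => simp at h
  | x :: y :: r => simp

private lemma ite_arith {A B C D : Prop} {d1 : Decidable (A ∧ C)} {d2 : Decidable (B ∧ ¬ D)}
    {d3 : Decidable (B ∧ D)} {d4 : Decidable (A ∧ ¬ C)} {d5 : Decidable B} {d6 : Decidable A} :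
    ((@ite ℤ (A ∧ C) d1 (-1) 0) + (@ite ℤ (B ∧ ¬ D) d2 1 0)) -
    ((@ite ℤ (B ∧ D) d3 (-1) 0) + (@ite ℤ (A ∧ ¬ C) d4 1 0)) =
    (@ite ℤ B d5 1 0) - (@ite ℤ A d6 1 0) := by
  classical
  by_cases hA : A <;> by_cases hB : B <;> by_cases hC : C <;> by_cases hD : D <;>
    simp [hA, hB, hC, hD]

open Classical in
private lemma no_res_path [Fintype V] (N : FlowNet V) (hst : N.s ≠ N.t)
    (f : V × V → ℕ) (hf : IsFlow N f)
    (hmin : ∀ g, IsFlow N g → flowSize N f ≤ flowSize N g) :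
    ¬ Relation.ReflTransGen (ResidualEdge N f) N.s N.t := by
  intro hreach
  obtain ⟨p, hne, hch, hnd, hh, hl⟩ := exists_nodup_path hreach
  set P := p.zip p.tail with hP
  set c : V × V → Prop := fun e => e ∈ N.E ∧ N.d e < f e with hc
  set δ : V × V → ℤ := fun e =>
    (if e ∈ P ∧ c e then (-1 : ℤ) else 0) +
      (if (e.2, e.1) ∈ P ∧ ¬ c (e.2, e.1) then 1 else 0) with hδ
  have hresP : ∀ a b : V, (a, b) ∈ P → ResidualEdge N f a b :=
    fun a b hab => chain'_of_zipTail hch hab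
  have hswap : ∀ a b : V, (a, b) ∈ P → (b, a) ∉ P :=
    fun a b hab => not_swap_mem_zipTail hnd hab
  have hδcases : ∀ e : V × V,
      (δ e = -1 ∧ e ∈ N.E ∧ N.d e < f e) ∨ δ e = 0 ∨ (δ e = 1 ∧ e ∈ N.E) := by
    rintro ⟨a, b⟩
    by_cases h1 : (a, b) ∈ P ∧ c (a, b)
    · left
      have h2 : ¬((b, a) ∈ P ∧ ¬ c (b, a)) := fun h => hswap a b h1.1 h.1
      exact ⟨by simp only [hδ]; rw [if_pos h1, if_neg h2]; norm_num, h1.2.1, h1.2.2⟩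
    · by_cases h2 : (b, a) ∈ P ∧ ¬ c (b, a)
      · right; right
        have hE : (a, b) ∈ N.E := by
          rcases hresP b a h2.1 with h | h
          · exact h
          · exact absurd h h2.2
        exact ⟨by simp only [hδ]; rw [if_neg h1, if_pos h2]; norm_num, hE⟩
      · right; left
        simp only [hδ]
        rw [if_neg h1, if_neg h2]
        norm_num
  have hg0 : ∀ e, 0 ≤ (f e : ℤ) + δ e := by
    intro e
    rcases hδcases e with ⟨h, _, hlt⟩ | h | ⟨h, _⟩
    · have h1 : 1 ≤ f e := by omega
      have h2 : (1 : ℤ) ≤ (f e : ℤ) := by exact_mod_cast h1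
      omega
    · rw [h]; positivity
    · rw [h]; positivity
  set g : V × V → ℕ := fun e => ((f e : ℤ) + δ e).toNat with hgdef
  have hg : ∀ e, (g e : ℤ) = (f e : ℤ) + δ e := fun e => Int.toNat_of_nonneg (hg0 e)
  have hpoint : ∀ u v : V, δ (u, v) - δ (v, u) =
      (if (v, u) ∈ P then (1 : ℤ) else 0) - (if (u, v) ∈ P then 1 else 0) := by
    intro u v
    simp only [hδ]
    exact ite_arith
  have hkey : ∀ v : V, (∑ u, δ (u, v)) - (∑ u, δ (v, u)) =
      (if v ∈ p.dropLast then (1 : ℤ) else 0) - (if v ∈ p.tail then 1 else 0) := by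
    intro v
    rw [← Finset.sum_sub_distrib, Finset.sum_congr rfl fun u _ => hpoint u v,
      Finset.sum_sub_distrib,
      sum_ind_fst P (by rw [map_fst_zipTail]; exact (List.dropLast_sublist p).nodup hnd) v,
      sum_ind_snd P (by rw [map_snd_zipTail]; exact (List.tail_sublist p).nodup hnd) v,
      map_fst_zipTail, map_snd_zipTail]
  have hsplit1 : ∀ w : V, (∑ u, (g (u, w) : ℤ)) = (∑ u, (f (u, w) : ℤ)) + ∑ u, δ (u, w) := by
    intro w; rw [← Finset.sum_add_distrib]; exact Finset.sum_congr rfl fun u _ => hg _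
  have hsplit2 : ∀ w : V, (∑ u, (g (w, u) : ℤ)) = (∑ u, (f (w, u) : ℤ)) + ∑ u, δ (w, u) := by
    intro w; rw [← Finset.sum_add_distrib]; exact Finset.sum_congr rfl fun u _ => hg _
  have hhead : p.head hne = N.s := by
    have := List.head?_eq_head hne
    rw [hh] at this
    injection this with h
    exact h.symm
  have hlast : p.getLast hne = N.t := by
    have := List.getLast?_eq_getLast hne
    rw [hl] at this
    injection this with h
    exact h.symm
  have hgflow : IsFlow N g := by
    refine ⟨?_, ?_, ?_⟩
    · intro e he
      have h0 : f e = 0 := hf.1 e he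
      have hδ0 : δ e = 0 := by
        rcases hδcases e with ⟨_, hE, _⟩ | h | ⟨_, hE⟩
        · exact absurd hE he
        · exact h
        · exact absurd hE he
      have : (g e : ℤ) = 0 := by rw [hg e, h0, hδ0]; simp
      exact_mod_cast this
    · intro e he
      have hd := hf.2.1 e he
      have hdz : (N.d e : ℤ) ≤ (f e : ℤ) := by exact_mod_cast hd
      have : (N.d e : ℤ) ≤ (g e : ℤ) := by
        rw [hg e]
        rcases hδcases e with ⟨h, _, hlt⟩ | h | ⟨h, _⟩
        · have : (N.d e : ℤ) < (f e : ℤ) := by exact_mod_cast hlt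
          omega
        · omega
        · omega
      exact_mod_cast this
    · intro v hvs hvt
      have hcons := hf.2.2 v hvs hvt
      have hmem : (if v ∈ p.dropLast then (1 : ℤ) else 0) -
          (if v ∈ p.tail then 1 else 0) = 0 := by
        by_cases hv : v ∈ p.tail
        · have hvp : v ∈ p := List.mem_of_mem_tail hv
          have hvd : v ∈ p.dropLast := by
            have hsplit := List.dropLast_append_getLast hne
            rw [← hsplit, List.mem_append, List.mem_singleton] at hvp
            rcases hvp with h | h
            · exact h
            · exact absurd (h.trans hlast) hvt
          simp [hv, hvd]
        · have hvd : v ∉ p.dropLast := by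
            intro hvd
            have hvp : v ∈ p := List.dropLast_subset p hvd
            rw [← List.cons_head_tail hne, List.mem_cons] at hvp
            rcases hvp with h | h
            · exact hvs (h.trans hhead)
            · exact hv h
          simp [hv, hvd]
      have h1 : (∑ u, δ (u, v)) = ∑ u, δ (v, u) := by
        have := hkey v; rw [hmem] at this; omega
      have hfc : (∑ u, (f (u, v) : ℤ)) = ∑ u, (f (v, u) : ℤ) := by exact_mod_cast hcons
      have : (∑ u, (g (u, v) : ℤ)) = ∑ u, (g (v, u) : ℤ) := by
        rw [hsplit1, hsplit2, hfc, h1]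
      exact_mod_cast this
  have hs_in : N.s ∈ p.dropLast := by
    rw [← hhead]
    exact head_mem_dropLast hne (by rw [hhead, hlast]; exact hst)
  have hs_out : N.s ∉ p.tail := by
    rw [← hhead]
    have hnd' := hnd
    rw [← List.cons_head_tail hne, List.nodup_cons] at hnd'
    exact hnd'.1
  have hkeys : (∑ u, δ (u, N.s)) - (∑ u, δ (N.s, u)) = 1 := by
    rw [hkey N.s]; simp [hs_in, hs_out]
  have hsize : flowSize N g = flowSize N f - 1 := by
    unfold flowSize
    rw [hsplit2 N.s, hsplit1 N.s]
    omega
  have := hmin g hgflow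
  omega

open Classical in
private lemma flowSize_eq_cutFlow [Fintype V] (N : FlowNet V) (f : V × V → ℕ)
    (hf : IsFlow N f) (S : Set V) (hs : N.s ∈ S) (ht : N.t ∉ S) :
    flowSize N f = cutFlow N S f := by
  have h1 : ∑ v ∈ Finset.univ.filter (· ∈ S),
      ((∑ u : V, (f (v, u) : ℤ)) - ∑ u : V, (f (u, v) : ℤ)) = flowSize N f := by
    rw [Finset.sum_eq_single_of_mem N.s (by simp [hs])]
    · rfl
    · intro v hv hvs
      have hvS : v ∈ S := by simpa using hv
      have hvt : v ≠ N.t := by rintro rfl; exact ht hvS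
      have h := hf.2.2 v hvs hvt
      have h' : (∑ u : V, (f (u, v) : ℤ)) = ∑ u : V, (f (v, u) : ℤ) := by exact_mod_cast h
      omega
  have e1 : ∑ v ∈ Finset.univ.filter (· ∈ S), (∑ u : V, (f (v, u) : ℤ)) =
      ∑ e ∈ Finset.univ.filter (fun e : V × V => e.1 ∈ S), (f e : ℤ) := by
    rw [Finset.sum_filter, Finset.sum_filter, Fintype.sum_prod_type]
    exact Finset.sum_congr rfl fun v _ => by split <;> simp
  have e2 : ∑ v ∈ Finset.univ.filter (· ∈ S), (∑ u : V, (f (u, v) : ℤ)) =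
      ∑ e ∈ Finset.univ.filter (fun e : V × V => e.2 ∈ S), (f e : ℤ) := by
    rw [Finset.sum_filter, Finset.sum_filter, Fintype.sum_prod_type_right]
    exact Finset.sum_congr rfl fun v _ => by split <;> simp
  have s1 : ∑ e ∈ Finset.univ.filter (fun e : V × V => e.1 ∈ S), (f e : ℤ) =
      (∑ e ∈ Finset.univ.filter (fun e : V × V => e.1 ∈ S ∧ e.2 ∈ S), (f e : ℤ)) +
      ∑ e ∈ Finset.univ.filter (fun e : V × V => e.1 ∈ S ∧ e.2 ∉ S), (f e : ℤ) := by
    rw [← Finset.sum_filter_add_sum_filter_not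
      (Finset.univ.filter (fun e : V × V => e.1 ∈ S)) (fun e => e.2 ∈ S),
      Finset.filter_filter, Finset.filter_filter]
  have s2 : ∑ e ∈ Finset.univ.filter (fun e : V × V => e.2 ∈ S), (f e : ℤ) =
      (∑ e ∈ Finset.univ.filter (fun e : V × V => e.1 ∈ S ∧ e.2 ∈ S), (f e : ℤ)) +
      ∑ e ∈ Finset.univ.filter (fun e : V × V => e.1 ∉ S ∧ e.2 ∈ S), (f e : ℤ) := by
    rw [← Finset.sum_filter_add_sum_filter_not
      (Finset.univ.filter (fun e : V × V => e.2 ∈ S)) (fun e => e.1 ∈ S),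
      Finset.filter_filter, Finset.filter_filter]
    congr 2 <;> · ext e; simp; tauto
  have sub1 : ∑ e ∈ Finset.univ.filter (fun e : V × V => e.1 ∈ S ∧ e.2 ∉ S), (f e : ℤ) =
      ∑ e ∈ N.E.filter (fun e : V × V => e.1 ∈ S ∧ e.2 ∉ S), (f e : ℤ) := by
    symm
    apply Finset.sum_subset
    · exact Finset.filter_subset_filter _ (Finset.subset_univ _)
    · intro e he hne
      have : e ∉ N.E := by
        intro heE
        exact hne (Finset.mem_filter.mpr ⟨heE, (Finset.mem_filter.mp he).2⟩)
      simp [hf.1 e this]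
  have sub2 : ∑ e ∈ Finset.univ.filter (fun e : V × V => e.1 ∉ S ∧ e.2 ∈ S), (f e : ℤ) =
      ∑ e ∈ N.E.filter (fun e : V × V => e.1 ∉ S ∧ e.2 ∈ S), (f e : ℤ) := by
    symm
    apply Finset.sum_subset
    · exact Finset.filter_subset_filter _ (Finset.subset_univ _)
    · intro e he hne
      have : e ∉ N.E := by
        intro heE
        exact hne (Finset.mem_filter.mpr ⟨heE, (Finset.mem_filter.mp he).2⟩)
      simp [hf.1 e this]
  rw [← h1, Finset.sum_sub_distrib, e1, e2, s1, s2, sub1, sub2]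
  unfold cutFlow
  ring

open Classical in
private lemma owCut_demand_le [Fintype V] (N : FlowNet V) (f : V × V → ℕ)
    (hf : IsFlow N f) (S : Set V) (how : IsOwCut N S) :
    (cutDemand N S : ℤ) ≤ flowSize N f := by
  rw [flowSize_eq_cutFlow N f hf S how.1.1 how.1.2]
  unfold cutFlow cutDemand
  have hempty : N.E.filter (fun e : V × V => e.1 ∉ S ∧ e.2 ∈ S) = ∅ := by
    rw [Finset.filter_eq_empty_iff]
    intro e he ⟨h1, h2⟩
    exact how.2 e he h1 h2
  rw [hempty, Finset.sum_empty, sub_zero]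
  push_cast
  apply Finset.sum_le_sum
  intro e he
  have := hf.2.1 e (Finset.mem_filter.mp he).1
  exact_mod_cast this

end FlowAux

end Prelude
/-- if `f` is a minimum flow and `S` is the set of vertices reachable from
`s` in the residual graph, then `(S, Sᶜ)` is a one-way cut, every crossing edge carries
flow equal to its demand, its demand equals `|f|`, and it is a maximum one-way cut. -/
theorem stmt_4 {V : Type*} [Fintype V] (N : FlowNet V) (hst : N.s ≠ N.t)
    (f : V × V → ℕ) (hf : IsFlow N f)
    (hmin : ∀ g, IsFlow N g → flowSize N f ≤ flowSize N g)
    (S : Set V) (hS : S = {v | Relation.ReflTransGen (ResidualEdge N f) N.s v}) :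
    IsOwCut N S ∧ (∀ e ∈ N.E, e.1 ∈ S → e.2 ∉ S → f e = N.d e) ∧
      (cutDemand N S : ℤ) = flowSize N f ∧
      ∀ S', IsOwCut N S' → cutDemand N S' ≤ cutDemand N S := by

  subst hS
  classical
  set S : Set V := {v | Relation.ReflTransGen (ResidualEdge N f) N.s v} with hSdef
  have hsS : N.s ∈ S := Relation.ReflTransGen.refl
  have hclosed : ∀ u v : V, u ∈ S → ResidualEdge N f u v → v ∈ S :=
    fun u v hu h => Relation.ReflTransGen.tail hu h
  have htS : N.t ∉ S := fun h => no_res_path N hst f hf hmin h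
  have how2 : ∀ e ∈ N.E, e.1 ∉ S → e.2 ∉ S := by
    intro e he h1 h2
    exact h1 (hclosed e.2 e.1 h2 (Or.inl (by simpa using he)))
  have how : IsOwCut N S := ⟨⟨hsS, htS⟩, how2⟩
  have hsat : ∀ e ∈ N.E, e.1 ∈ S → e.2 ∉ S → f e = N.d e := by
    intro e he h1 h2
    have hd := hf.2.1 e he
    by_contra hne
    have hlt : N.d e < f e := lt_of_le_of_ne hd (fun h => hne h.symm)
    exact h2 (hclosed e.1 e.2 h1 (Or.inr ⟨by simpa using he, by simpa using hlt⟩))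
  have hdem : (cutDemand N S : ℤ) = flowSize N f := by
    rw [flowSize_eq_cutFlow N f hf S hsS htS]
    unfold cutFlow cutDemand
    have hempty : N.E.filter (fun e : V × V => e.1 ∉ S ∧ e.2 ∈ S) = ∅ := by
      rw [Finset.filter_eq_empty_iff]
      intro e he ⟨h1, h2⟩
      exact how2 e he h1 h2
    rw [hempty, Finset.sum_empty, sub_zero]
    push_cast
    apply Finset.sum_congr rfl
    intro e he
    obtain ⟨heE, h1, h2⟩ := Finset.mem_filter.mp he
    rw [hsat e heE h1 h2]
  refine ⟨how, hsat, hdem, ?_⟩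
  intro S' how'
  have h1 := owCut_demand_le N f hf S' how'
  rw [← hdem] at h1
  exact_mod_cast h1
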